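/- Let Ω ⊂ ℝ^n be a bounded Lipschitz domain, n ≥ 1, and G an N-function in Δ₂ ∩ ∇₂ with derivative g satisfying tg(t) ≤ s_G G(t) and G*(G(t)/t) ≤ G(t) (up to constants). Then there is C = C(n, m, |Ω|, G) such that for every u ∈ W₀^{1,G}(Ω, ℝ^m), ∫_Ω G(|u|)^{n'} dx ≤ C (∫_Ω G(|Du|) dx)^{n'}, where n' = n/(n−1). -/

import Mathlib

open MeasureTheory
set_option maxHeartbeats 1000000
open MeasureTheory Set
open scoped ENNReal NNReal

section Gfacts
variable {G g : ℝ → ℝ} {iG sG : ℝ}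

lemma aux_nonneg (hG0 : G 0 = 0) (hGpos : ∀ t, 0 < t → 0 < G t) {t : ℝ} (ht : 0 ≤ t) :
    0 ≤ G t := by
  rcases ht.lt_or_eq with h | h
  · exact (hGpos t h).le
  · simp [← h, hG0]

lemma aux_mono (hconv : ConvexOn ℝ (Set.Ici 0) G) (hG0 : G 0 = 0)
    (hGpos : ∀ t, 0 < t → 0 < G t) {a b : ℝ} (ha : 0 ≤ a) (hab : a ≤ b) : G a ≤ G b := by
  rcases hab.lt_or_eq with h | h
  · have hb : 0 < b := lt_of_le_of_lt ha h
    have hw1 : (0:ℝ) ≤ 1 - a / b := by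
      have : a / b ≤ 1 := by rw [div_le_one hb]; exact hab
      linarith
    have hw2 : (0:ℝ) ≤ a / b := by positivity
    have h2 := hconv.2 (Set.self_mem_Ici (a := (0:ℝ))) (Set.mem_Ici.2 (le_of_lt hb))
      hw1 hw2 (by ring)
    have hab' : (1 - a / b) • (0:ℝ) + (a / b) • b = a := by
      rw [smul_zero, zero_add, smul_eq_mul, div_mul_cancel₀ a hb.ne']
    rw [hab'] at h2
    have hGb := aux_nonneg hG0 hGpos (le_trans ha hab)
    have : a / b ≤ 1 := by
      rw [div_le_one hb]; exact hab
    calc G a ≤ (1 - a / b) • G 0 + (a / b) • G b := h2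
      _ = (a / b) * G b := by simp [hG0]
      _ ≤ 1 * G b := by apply mul_le_mul_of_nonneg_right this hGb
      _ = G b := one_mul _
  · rw [h]

lemma aux_gpos (hGpos : ∀ t, 0 < t → 0 < G t) (h1 : 1 < iG)
    (hbd : ∀ t, 0 < t → iG * G t ≤ t * g t ∧ t * g t ≤ sG * G t) {t : ℝ} (ht : 0 < t) :
    0 < g t := by
  have h := (hbd t ht).1
  have := hGpos t ht
  nlinarith

lemma aux_gmono (hconv : ConvexOn ℝ (Set.Ici 0) G) (hG' : ∀ t, 0 < t → HasDerivAt G (g t) t)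
    {a b : ℝ} (ha : 0 < a) (hab : a ≤ b) : g a ≤ g b := by
  rcases hab.lt_or_eq with h | h
  · exact (hconv.le_slope_of_hasDerivAt (Set.mem_Ici.2 ha.le)
      (Set.mem_Ici.2 (ha.trans h).le) h (hG' a ha)).trans
      (hconv.slope_le_of_hasDerivAt (Set.mem_Ici.2 ha.le)
      (Set.mem_Ici.2 (ha.trans h).le) h (hG' b (ha.trans h)))
  · rw [h]

lemma aux_gcont (hconv : ConvexOn ℝ (Set.Ici 0) G) (hG' : ∀ t, 0 < t → HasDerivAt G (g t) t)
    {t : ℝ} (ht : 0 < t) : ContinuousAt g t := by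
  have hGc : ∀ r, 0 < r → ContinuousAt G r := fun r hr => (hG' r hr).continuousAt
  rw [ContinuousAt]
  refine tendsto_order.2 ⟨fun l hl => ?_, fun L hL => ?_⟩
  · -- lower bound
    have hslope : Filter.Tendsto (slope G t) (nhdsWithin t {t}ᶜ) (nhds (g t)) :=
      hasDerivAt_iff_tendsto_slope.1 (hG' t ht)
    have hne : (nhdsWithin t (Set.Ioo 0 t)).NeBot := by
      exact IsLUB.nhdsWithin_neBot (isLUB_Ioo ht) (Set.nonempty_Ioo.2 ht)
    have hle : nhdsWithin t (Set.Ioo 0 t) ≤ nhdsWithin t {t}ᶜ :=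
      nhdsWithin_mono t (fun x hx => ne_of_lt hx.2)
    have hev : ∀ᶠ x in nhdsWithin t (Set.Ioo 0 t), l < slope G t x ∧ x ∈ Set.Ioo 0 t := by
      refine Filter.Eventually.and ?_ self_mem_nhdsWithin
      exact (hslope.mono_left hle).eventually_const_lt hl
    obtain ⟨a, hla, ha⟩ := hev.exists
    rw [slope_comm] at hla
    have hFc : ContinuousAt (fun r => (G r - G a) / (r - a)) t := by
      apply ContinuousAt.div
      · exact (hGc t ht).sub continuousAt_const
      · exact continuousAt_id.sub continuousAt_const
      · have := ha.2; intro h; rw [sub_eq_zero] at h; exact absurd h (ne_of_gt this)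
    have hFt : l < (G t - G a) / (t - a) := by
      have : slope G a t = (G t - G a) / (t - a) := slope_def_field G a t
      rwa [this] at hla
    have hev2 : ∀ᶠ r in nhds t, l < (G r - G a) / (r - a) :=
      hFc.eventually_const_lt hFt
    have hev3 : ∀ᶠ r in nhds t, a < r := eventually_gt_nhds ha.2
    filter_upwards [hev2, hev3] with r h2 h3
    rcases le_or_gt t r with h | h
    · exact hl.trans_le (aux_gmono hconv hG' ht h)
    · have hr : 0 < r := ha.1.trans h3
      have : slope G a r ≤ g r := hconv.slope_le_of_hasDerivAt
        (Set.mem_Ici.2 ha.1.le) (Set.mem_Ici.2 hr.le) h3 (hG' r hr)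
      rw [slope_def_field] at this
      exact h2.trans_le this
  · have hslope : Filter.Tendsto (slope G t) (nhdsWithin t {t}ᶜ) (nhds (g t)) :=
      hasDerivAt_iff_tendsto_slope.1 (hG' t ht)
    have hne : (nhdsWithin t (Set.Ioo t (t+1))).NeBot :=
      IsGLB.nhdsWithin_neBot (isGLB_Ioo (by linarith)) (Set.nonempty_Ioo.2 (by linarith))
    have hle : nhdsWithin t (Set.Ioo t (t+1)) ≤ nhdsWithin t {t}ᶜ :=
      nhdsWithin_mono t (fun x hx => (ne_of_gt hx.1))
    have hev : ∀ᶠ x in nhdsWithin t (Set.Ioo t (t+1)), slope G t x < L ∧ x ∈ Set.Ioo t (t+1) := by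
      refine Filter.Eventually.and ?_ self_mem_nhdsWithin
      exact (hslope.mono_left hle).eventually_lt_const hL
    obtain ⟨b, hlb, hb⟩ := hev.exists
    have hFc : ContinuousAt (fun r => (G b - G r) / (b - r)) t := by
      apply ContinuousAt.div
      · exact continuousAt_const.sub (hGc t ht)
      · exact continuousAt_const.sub continuousAt_id
      · have := hb.1; intro h; rw [sub_eq_zero] at h; exact absurd h.symm (ne_of_lt this)
    have hFt : (G b - G t) / (b - t) < L := by
      have : slope G t b = (G b - G t) / (b - t) := slope_def_field G t b
      rwa [this] at hlb
    have hev2 : ∀ᶠ r in nhds t, (G b - G r) / (b - r) < L := hFc.eventually_lt_const hFt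
    have hev3 : ∀ᶠ r in nhds t, r < b := eventually_lt_nhds hb.1
    have hev4 : ∀ᶠ r in nhds t, 0 < r := eventually_gt_nhds ht
    filter_upwards [hev2, hev3, hev4] with r h2 h3 h4
    rcases le_or_gt r t with h | h
    · exact lt_of_le_of_lt (aux_gmono hconv hG' h4 h) hL
    · have : g r ≤ slope G r b := hconv.le_slope_of_hasDerivAt
        (Set.mem_Ici.2 h4.le) (Set.mem_Ici.2 (h4.trans h3).le) h3 (hG' r h4)
      rw [slope_def_field] at this
      exact lt_of_le_of_lt this h2

lemma aux_contDiffAt (hconv : ConvexOn ℝ (Set.Ici 0) G)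
    (hG' : ∀ t, 0 < t → HasDerivAt G (g t) t) {t : ℝ} (ht : 0 < t) :
    ContDiffAt ℝ 1 G t := by
  have hcd : ContDiffOn ℝ 1 G (Set.Ioi 0) := by
    rw [show ((1:WithTop ℕ∞)) = 0 + 1 from rfl,
      contDiffOn_succ_iff_deriv_of_isOpen isOpen_Ioi]
    refine ⟨fun x hx => ((hG' x hx).differentiableAt).differentiableWithinAt, by simp, ?_⟩
    rw [contDiffOn_zero]
    apply ContinuousOn.congr (f := g)
    · exact fun x hx => ((aux_gcont hconv hG' hx).continuousWithinAt)
    · exact fun x hx => ((hG' x hx).deriv)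
  exact hcd.contDiffAt (Ioi_mem_nhds ht)

lemma aux_Gmax_cont (hconv : ConvexOn ℝ (Set.Ici 0) G) (hG0 : G 0 = 0)
    (hG' : ∀ t, 0 < t → HasDerivAt G (g t) t)
    (hGpos : ∀ t, 0 < t → 0 < G t) :
    Continuous (fun t => G (max t 0)) := by
  rw [continuous_iff_continuousAt]
  intro t
  rcases lt_trichotomy t 0 with h | h | h
  · have hev : (fun s => G (max s 0)) =ᶠ[nhds t] (fun _ => G 0) := by
      filter_upwards [eventually_lt_nhds h] with s hs
      rw [max_eq_right hs.le]
    exact ContinuousAt.congr continuousAt_const hev.symm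
  · subst h
    have key : ∀ s : ℝ, |s| ≤ 1 → ‖G (max s 0)‖ ≤ |s| * G 1 := by
      intro s hs
      have h1 : 0 ≤ G (max s 0) := aux_nonneg hG0 hGpos (le_max_right s 0)
      have h2 : G (max s 0) ≤ |s| * G 1 := by
        have hm : max s 0 ≤ |s| := by
          rcases le_total s 0 with h' | h'
          · simp [max_eq_right h', abs_nonneg]
          · simp [max_eq_left h', le_abs_self]
        calc G (max s 0) ≤ G |s| := aux_mono hconv hG0 hGpos (le_max_right s 0) hm
          _ ≤ |s| * G 1 := by
            have := hconv.2 (Set.self_mem_Ici (a := (0:ℝ))) (Set.mem_Ici.2 zero_le_one)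
              (sub_nonneg.2 hs) (abs_nonneg s) (by ring)
            simpa [hG0] using this
      rw [Real.norm_of_nonneg h1]
      exact h2
    have : Filter.Tendsto (fun s => G (max s 0)) (nhds 0) (nhds 0) := by
      apply squeeze_zero_norm' (f := fun s => G (max s 0)) (a := fun s => |s| * G 1)
      · filter_upwards [eventually_abs_sub_lt 0 (zero_lt_one)] with s hs
        exact key s (by simpa using hs.le)
      · have : Filter.Tendsto (fun s : ℝ => |s| * G 1) (nhds 0) (nhds (|(0:ℝ)| * G 1)) := by
          apply Continuous.tendsto
          continuity
        simpa using this
    unfold ContinuousAt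
    simpa [hG0] using this
  · have hev : (fun s => G (max s 0)) =ᶠ[nhds t] G := by
      filter_upwards [eventually_gt_nhds h] with s hs
      rw [max_eq_left hs.le]
    exact ContinuousAt.congr ((hG' t h).continuousAt) hev.symm

lemma aux_double (hG0 : G 0 = 0) (hGpos : ∀ t, 0 < t → 0 < G t)
    (hG' : ∀ t, 0 < t → HasDerivAt G (g t) t)
    (hbd : ∀ t, 0 < t → iG * G t ≤ t * g t ∧ t * g t ≤ sG * G t)
    (hsG : 0 < sG) {a κ : ℝ} (ha : 0 ≤ a) (hκ : 1 ≤ κ) :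
    G (κ * a) ≤ κ ^ sG * G a := by
  rcases ha.lt_or_eq with ha' | ha'
  · have hκ0 : (0:ℝ) < κ := lt_of_lt_of_le one_pos hκ
    set h : ℝ → ℝ := fun l => G (l * a) / l ^ sG with hdef
    have hd : ∀ l : ℝ, 0 < l → HasDerivAt h
        ((g (l*a) * a * l ^ sG - G (l*a) * (sG * l ^ (sG - 1))) / (l ^ sG)^2) l := by
      intro l hl
      have h1 : HasDerivAt (fun l => G (l * a)) (g (l*a) * a) l := by
        exact (hG' (l*a) (by positivity)).comp l (hasDerivAt_mul_const a)
      have h2 : HasDerivAt (fun l : ℝ => l ^ sG) (sG * l ^ (sG - 1)) l :=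
        Real.hasDerivAt_rpow_const (Or.inl (ne_of_gt hl))
      exact h1.div h2 (by positivity)
    have key : AntitoneOn h (Set.Ici 1) := by
      apply antitoneOn_of_deriv_nonpos (convex_Ici 1)
      · intro l hl
        have hl0 : (0:ℝ) < l := lt_of_lt_of_le one_pos hl
        exact ((hd l hl0).continuousAt).continuousWithinAt
      · intro l hl
        rw [interior_Ici] at hl
        have hl0 : (0:ℝ) < l := lt_trans one_pos hl
        exact (hd l hl0).differentiableAt.differentiableWithinAt
      · intro l hl
        rw [interior_Ici] at hl
        have hl0 : (0:ℝ) < l := lt_trans one_pos hl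
        rw [(hd l hl0).deriv]
        apply div_nonpos_of_nonpos_of_nonneg _ (by positivity)
        have hla : 0 < l * a := by positivity
        have hb := (hbd (l*a) hla).2
        have hls : l ^ (sG - 1) * l = l ^ sG := by
          rw [← Real.rpow_add_one (ne_of_gt hl0) (sG - 1)]
          ring_nf
        have hP : 0 ≤ l ^ (sG - 1) := Real.rpow_nonneg hl0.le _
        have : g (l*a) * a * l ^ sG ≤ G (l*a) * (sG * l ^ (sG - 1)) := by
          calc g (l*a) * a * l ^ sG = (l * a * g (l*a)) * l ^ (sG - 1) := by
                rw [← hls]; ring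
            _ ≤ (sG * G (l*a)) * l ^ (sG - 1) := mul_le_mul_of_nonneg_right hb hP
            _ = G (l*a) * (sG * l ^ (sG - 1)) := by ring
        linarith
    have h2 := key (Set.self_mem_Ici) (Set.mem_Ici.2 hκ) hκ
    have h1v : h 1 = G a := by simp [hdef, Real.one_rpow]
    have hκv : h κ = G (κ * a) / κ ^ sG := rfl
    rw [h1v, hκv, div_le_iff₀ (by positivity)] at h2
    linarith [h2]
  · rw [← ha']
    simp [hG0]

lemma aux_young (hconv : ConvexOn ℝ (Set.Ici 0) G) (hG0 : G 0 = 0)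
    (hGpos : ∀ t, 0 < t → 0 < G t)
    (hG' : ∀ t, 0 < t → HasDerivAt G (g t) t) (h1 : 1 < iG) (hle : iG ≤ sG)
    (hbd : ∀ t, 0 < t → iG * G t ≤ t * g t ∧ t * g t ≤ sG * G t)
    {t a κ : ℝ} (ht : 0 < t) (ha : 0 ≤ a) (hκ : 1 ≤ κ) :
    a * g t ≤ sG / κ * G t + sG * κ ^ (sG - 1) * G a := by
  have hκ0 : (0:ℝ) < κ := lt_of_lt_of_le one_pos hκ
  have hsG : (0:ℝ) < sG := by linarith
  have hGt := hGpos t ht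
  have hgt := aux_gpos hGpos h1 hbd ht
  rcases le_or_gt (κ * a) t with h | h
  · have key : a * g t ≤ sG / κ * G t := by
      rw [div_mul_eq_mul_div, le_div_iff₀ hκ0]
      calc a * g t * κ = (κ * a) * g t := by ring
        _ ≤ t * g t := mul_le_mul_of_nonneg_right h hgt.le
        _ ≤ sG * G t := (hbd t ht).2
    have h5 : 0 ≤ sG * κ ^ (sG - 1) * G a :=
      mul_nonneg (mul_nonneg hsG.le (Real.rpow_nonneg hκ0.le _)) (aux_nonneg hG0 hGpos ha)
    linarith
  · have ha' : 0 < a := by nlinarith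
    have hκa : 0 < κ * a := by positivity
    have hg2 : g t ≤ g (κ * a) := aux_gmono hconv hG' ht h.le
    have h3 : (κ*a) * g (κ*a) ≤ sG * G (κ*a) := (hbd _ hκa).2
    have h4 : G (κ*a) ≤ κ ^ sG * G a := aux_double hG0 hGpos hG' hbd hsG ha hκ
    have key : a * g t ≤ sG * κ ^ (sG - 1) * G a := by
      have e1 : a * g t ≤ a * g (κ*a) := mul_le_mul_of_nonneg_left hg2 ha'.le
      have e2 : κ * (a * g (κ*a)) ≤ κ * (sG * κ ^ (sG - 1) * G a) := by
        have e4 : κ * (sG * κ ^ (sG - 1) * G a) = sG * (κ ^ sG * G a) := by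
          rw [Real.rpow_sub hκ0, Real.rpow_one]
          field_simp
        rw [e4]
        calc κ * (a * g (κ*a)) = (κ*a) * g (κ*a) := by ring
          _ ≤ sG * G (κ*a) := h3
          _ ≤ sG * (κ ^ sG * G a) := mul_le_mul_of_nonneg_left h4 hsG.le
      have := le_of_mul_le_mul_left e2 hκ0
      linarith
    have h6 : 0 ≤ sG / κ * G t := mul_nonneg (div_nonneg hsG.le hκ0.le) hGt.le
    linarith

open scoped RealInnerProductSpace in
lemma aux_deriv {n m : ℕ} {G g : ℝ → ℝ}
    (hG' : ∀ t, 0 < t → HasDerivAt G (g t) t)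
    (u : EuclideanSpace ℝ (Fin n) → EuclideanSpace ℝ (Fin m)) (hu : ContDiff ℝ 1 u)
    {ε : ℝ} (hε : 0 < ε) (x : EuclideanSpace ℝ (Fin n))
    (hgnn : 0 ≤ g (Real.sqrt (‖u x‖^2 + ε^2))) :
    ∃ D : EuclideanSpace ℝ (Fin n) →L[ℝ] ℝ,
      HasFDerivAt (fun y => G (Real.sqrt (‖u y‖^2 + ε^2))) D x ∧
      ‖D‖ ≤ g (Real.sqrt (‖u x‖^2 + ε^2)) * ‖fderiv ℝ u x‖ := by
  have hqpos : 0 < ‖u x‖^2 + ε^2 := by positivity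
  have hspos : 0 < Real.sqrt (‖u x‖^2 + ε^2) := Real.sqrt_pos.2 hqpos
  set sx := Real.sqrt (‖u x‖^2 + ε^2) with hsx
  have hu' : HasFDerivAt u (fderiv ℝ u x) x := (hu.differentiable one_ne_zero x).hasFDerivAt
  set Φ : EuclideanSpace ℝ (Fin n) →L[ℝ] ℝ :=
    ((fderivInnerCLM ℝ (u x, u x)).comp ((fderiv ℝ u x).prod (fderiv ℝ u x))) with hΦ
  have hq : HasFDerivAt (fun y => ‖u y‖^2 + ε^2) Φ x := by
    have hi : HasFDerivAt (fun y => ⟪u y, u y⟫) Φ x := hu'.inner ℝ hu'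
    have : (fun y => ‖u y‖^2 + ε^2) = (fun y => ⟪u y, u y⟫ + ε^2) := by
      funext y
      rw [real_inner_self_eq_norm_sq]
    rw [this]
    exact hi.add_const _
  have hs : HasFDerivAt (fun y => Real.sqrt (‖u y‖^2 + ε^2)) ((1 / (2 * sx)) • Φ) x :=
    hq.sqrt (ne_of_gt hqpos)
  have hGc : HasFDerivAt (fun y => G (Real.sqrt (‖u y‖^2 + ε^2)))
      (g sx • ((1 / (2 * sx)) • Φ)) x :=
    (hG' sx hspos).comp_hasFDerivAt x hs
  refine ⟨_, hGc, ?_⟩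
  have hΦbd : ‖Φ‖ ≤ 2 * ‖u x‖ * ‖fderiv ℝ u x‖ := by
    apply ContinuousLinearMap.opNorm_le_bound _ (by positivity)
    intro h
    have happ : Φ h = ⟪u x, (fderiv ℝ u x) h⟫ + ⟪(fderiv ℝ u x) h, u x⟫ := by
      simp [hΦ, fderivInnerCLM_apply]
    rw [happ]
    have c1 : |⟪u x, (fderiv ℝ u x) h⟫| ≤ ‖u x‖ * ‖(fderiv ℝ u x) h‖ := abs_real_inner_le_norm _ _
    have c2 : |⟪(fderiv ℝ u x) h, u x⟫| ≤ ‖(fderiv ℝ u x) h‖ * ‖u x‖ := abs_real_inner_le_norm _ _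
    have c3 : ‖(fderiv ℝ u x) h‖ ≤ ‖fderiv ℝ u x‖ * ‖h‖ := (fderiv ℝ u x).le_opNorm h
    have := abs_add_le (⟪u x, (fderiv ℝ u x) h⟫) (⟪(fderiv ℝ u x) h, u x⟫)
    rw [Real.norm_eq_abs]
    have hn : 0 ≤ ‖u x‖ := norm_nonneg _
    nlinarith [norm_nonneg h, norm_nonneg (fderiv ℝ u x)]
  have hux : ‖u x‖ ≤ sx := by
    nlinarith [Real.sq_sqrt hqpos.le, hspos, norm_nonneg (u x)]
  have step : ‖g sx • (1 / (2 * sx)) • Φ‖ ≤ g sx * (1 / (2 * sx) * ‖Φ‖) := by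
    calc ‖g sx • (1 / (2 * sx)) • Φ‖ ≤ ‖g sx‖ * ‖(1 / (2 * sx)) • Φ‖ :=
          ContinuousLinearMap.opNorm_smul_le _ _
      _ ≤ ‖g sx‖ * (‖(1 / (2 * sx) : ℝ)‖ * ‖Φ‖) := by
          apply mul_le_mul_of_nonneg_left (ContinuousLinearMap.opNorm_smul_le _ _) (norm_nonneg _)
      _ = g sx * (1 / (2 * sx) * ‖Φ‖) := by
          rw [Real.norm_of_nonneg hgnn, Real.norm_of_nonneg (by positivity : (0:ℝ) ≤ 1 / (2 * sx))]
  apply le_trans step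
  calc g sx * (1 / (2 * sx) * ‖Φ‖) ≤ g sx * (1 / (2 * sx) * (2 * ‖u x‖ * ‖fderiv ℝ u x‖)) := by
        apply mul_le_mul_of_nonneg_left _ hgnn
        apply mul_le_mul_of_nonneg_left hΦbd (by positivity)
    _ = g sx * ‖fderiv ℝ u x‖ * (‖u x‖ / sx) := by field_simp
    _ ≤ g sx * ‖fderiv ℝ u x‖ * 1 := by
        apply mul_le_mul_of_nonneg_left _ (mul_nonneg hgnn (norm_nonneg _))
        rw [div_le_one hspos]
        exact hux
    _ = g sx * ‖fderiv ℝ u x‖ := mul_one _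

lemma aux_gns {n : ℕ} (hn : 2 ≤ n) (v : EuclideanSpace ℝ (Fin n) → ℝ)
    (hv : ContDiff ℝ 1 v) (h2v : HasCompactSupport v) (hv0 : ∀ x, 0 ≤ v x) :
    ∫ x, v x ^ ((n:ℝ)/((n:ℝ)-1)) ≤
      (MeasureTheory.lintegralPowLePowLIntegralFDerivConst
        (volume : Measure (EuclideanSpace ℝ (Fin n))) ((n:ℝ)/((n:ℝ)-1))).toReal *
      (∫ x, ‖fderiv ℝ v x‖) ^ ((n:ℝ)/((n:ℝ)-1)) := by
  set p : ℝ := (n:ℝ)/((n:ℝ)-1) with hpdef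
  have hn1 : (1:ℝ) < (n:ℝ) := by
    have : (2:ℝ) ≤ (n:ℝ) := by exact_mod_cast hn
    linarith
  have hp1 : 1 < p := by
    rw [hpdef, lt_div_iff₀ (by linarith)]
    linarith
  have hp0 : 0 < p := lt_trans one_pos hp1
  have hp : Real.HolderConjugate (n:ℝ) p :=
    (Real.holderConjugate_iff_eq_conjExponent hn1).2 hpdef
  have hfr : Module.finrank ℝ (EuclideanSpace ℝ (Fin n)) = n := finrank_euclideanSpace_fin
  have key := MeasureTheory.lintegral_pow_le_pow_lintegral_fderiv
    (volume : Measure (EuclideanSpace ℝ (Fin n))) hv h2v (p := p) (by rw [hfr]; exact hp)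
  have hvpc : Continuous (fun x => v x ^ p) :=
    hv.continuous.rpow_const (fun x => Or.inr hp0.le)
  have hvpsupp : HasCompactSupport (fun x => v x ^ p) :=
    h2v.comp_left (g := fun t : ℝ => t ^ p) (Real.zero_rpow (ne_of_gt hp0))
  have hint1 : Integrable (fun x => v x ^ p) := hvpc.integrable_of_hasCompactSupport hvpsupp
  have hdc : Continuous (fun x => ‖fderiv ℝ v x‖) := (hv.continuous_fderiv one_ne_zero).norm
  have hdsupp : HasCompactSupport (fun x => ‖fderiv ℝ v x‖) :=
    (h2v.fderiv (𝕜 := ℝ)).comp_left (g := fun w : EuclideanSpace ℝ (Fin n) →L[ℝ] ℝ => ‖w‖)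
      norm_zero
  have hint2 : Integrable (fun x => ‖fderiv ℝ v x‖) :=
    hdc.integrable_of_hasCompactSupport hdsupp
  have e1 : ENNReal.ofReal (∫ x, v x ^ p) = ∫⁻ x, (‖v x‖₊ : ℝ≥0∞) ^ p ∂volume := by
    rw [MeasureTheory.ofReal_integral_eq_lintegral_ofReal hint1
      (Filter.Eventually.of_forall fun x => Real.rpow_nonneg (hv0 x) p)]
    apply lintegral_congr
    intro x
    rw [← enorm_eq_nnnorm, ← ofReal_norm_eq_enorm, Real.norm_of_nonneg (hv0 x),
      ← ENNReal.ofReal_rpow_of_nonneg (hv0 x) hp0.le]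
  have e2 : ENNReal.ofReal (∫ x, ‖fderiv ℝ v x‖) = ∫⁻ x, (‖fderiv ℝ v x‖₊ : ℝ≥0∞) ∂volume := by
    rw [MeasureTheory.ofReal_integral_eq_lintegral_ofReal hint2
      (Filter.Eventually.of_forall fun x => norm_nonneg _)]
    apply lintegral_congr
    intro x
    rw [← enorm_eq_nnnorm, ← ofReal_norm_eq_enorm]
  have hfin : ((MeasureTheory.lintegralPowLePowLIntegralFDerivConst
        (volume : Measure (EuclideanSpace ℝ (Fin n))) p : ℝ≥0∞) *
      (∫⁻ x, (‖fderiv ℝ v x‖₊ : ℝ≥0∞) ∂volume) ^ p) ≠ ⊤ := by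
    apply ENNReal.mul_ne_top ENNReal.coe_ne_top
    apply ENNReal.rpow_ne_top_of_nonneg hp0.le
    rw [← e2]
    exact ENNReal.ofReal_ne_top
  calc ∫ x, v x ^ p = (ENNReal.ofReal (∫ x, v x ^ p)).toReal :=
        (ENNReal.toReal_ofReal (integral_nonneg fun x => Real.rpow_nonneg (hv0 x) p)).symm
    _ ≤ ((MeasureTheory.lintegralPowLePowLIntegralFDerivConst
          (volume : Measure (EuclideanSpace ℝ (Fin n))) p : ℝ≥0∞) *
        (∫⁻ x, (‖fderiv ℝ v x‖₊ : ℝ≥0∞) ∂volume) ^ p).toReal := by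
        apply ENNReal.toReal_mono hfin
        rw [e1]
        exact key
    _ = (MeasureTheory.lintegralPowLePowLIntegralFDerivConst
          (volume : Measure (EuclideanSpace ℝ (Fin n))) p).toReal *
        (∫ x, ‖fderiv ℝ v x‖) ^ p := by
        rw [ENNReal.toReal_mul, ← ENNReal.toReal_rpow, ← e2,
          ENNReal.toReal_ofReal (integral_nonneg fun x => norm_nonneg _)]
        rfl

lemma aux_addpow {a b p : ℝ} (ha : 0 ≤ a) (hb : 0 ≤ b) (hp : 1 ≤ p) :
    (a + b) ^ p ≤ 2 ^ (p - 1) * (a ^ p + b ^ p) := by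
  have h := (convexOn_rpow hp).2 (Set.mem_Ici.2 ha) (Set.mem_Ici.2 hb)
    (by norm_num : (0:ℝ) ≤ 1/2) (by norm_num : (0:ℝ) ≤ 1/2) (by norm_num)
  simp only [smul_eq_mul] at h
  have hp0 : (0:ℝ) < p := lt_of_lt_of_le one_pos hp
  have key : ((a + b)/2) ^ p ≤ (a ^ p + b ^ p)/2 := by
    have e : (1/2 : ℝ) * a + (1/2) * b = (a+b)/2 := by ring
    rw [e] at h
    calc ((a+b)/2) ^ p ≤ 1/2 * a^p + 1/2 * b^p := h
      _ = (a^p + b^p)/2 := by ring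
  have e2 : (a + b) ^ p = 2 ^ p * ((a+b)/2) ^ p := by
    rw [← Real.mul_rpow (by norm_num) (by positivity)]
    ring_nf
  rw [e2]
  have e3 : (2:ℝ) ^ (p - 1) = 2 ^ p / 2 := by
    rw [Real.rpow_sub (by norm_num : (0:ℝ) < 2), Real.rpow_one]
  rw [e3]
  calc (2:ℝ) ^ p * ((a+b)/2) ^ p ≤ 2 ^ p * ((a^p + b^p)/2) := by
        apply mul_le_mul_of_nonneg_left key (by positivity)
    _ = 2 ^ p / 2 * (a ^ p + b ^ p) := by ring

/-- Orlicz Sobolev–Poincaré inequality: for G an N-function in Δ₂ ∩ ∇₂ on a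
bounded Lipschitz-type domain Ω, every u ∈ W₀^{1,G}(Ω,ℝ^m) (stated here for
smooth compactly supported maps, which are dense) satisfies
∫ G(|u|)^{n'} ≤ C (∫ G(|Du|))^{n'} with n' = n/(n−1). -/
theorem orlicz_sobolev_poincare
    {n m : ℕ} (hn : 2 ≤ n)
    (Ω : Set (EuclideanSpace ℝ (Fin n))) (hΩopen : IsOpen Ω)
    (hΩbdd : Bornology.IsBounded Ω)
    (G g : ℝ → ℝ) (iG sG : ℝ)
    (hconv : ConvexOn ℝ (Set.Ici 0) G) (hG0 : G 0 = 0)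
    (hG' : ∀ t, 0 < t → HasDerivAt G (g t) t)
    (hGpos : ∀ t, 0 < t → 0 < G t)
    (h1 : 1 < iG) (hle : iG ≤ sG)
    (hbd : ∀ t, 0 < t → iG * G t ≤ t * g t ∧ t * g t ≤ sG * G t) :
    ∃ C : ℝ, 0 < C ∧
      ∀ u : EuclideanSpace ℝ (Fin n) → EuclideanSpace ℝ (Fin m),
        ContDiff ℝ 1 u → HasCompactSupport u → tsupport u ⊆ Ω →
        ∫ x in Ω, G ‖u x‖ ^ ((n : ℝ) / (n - 1)) ≤
          C * (∫ x in Ω, G ‖fderiv ℝ u x‖) ^ ((n : ℝ) / (n - 1)) := by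
  classical
  set p : ℝ := (n:ℝ)/((n:ℝ)-1) with hpdef
  have hn1 : (1:ℝ) < (n:ℝ) := by
    have : (2:ℝ) ≤ (n:ℝ) := by exact_mod_cast hn
    linarith
  have hp1 : 1 < p := by
    rw [hpdef, lt_div_iff₀ (by linarith)]
    linarith
  have hp0 : 0 < p := lt_trans one_pos hp1
  have hsG1 : 1 < sG := lt_of_lt_of_le h1 hle
  have hsG0 : 0 < sG := lt_trans one_pos hsG1
  have hΩmeas : MeasurableSet Ω := hΩopen.measurableSet
  have hVfin : volume Ω < ⊤ := hΩbdd.measure_lt_top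
  set V : ℝ := (volume Ω).toReal with hVdef
  have hV0 : 0 ≤ V := ENNReal.toReal_nonneg
  set c₀ : ℝ := (MeasureTheory.lintegralPowLePowLIntegralFDerivConst
    (volume : Measure (EuclideanSpace ℝ (Fin n))) p : ℝ≥0).toReal with hc₀def
  have hc₀0 : 0 ≤ c₀ := NNReal.coe_nonneg _
  set c₁ : ℝ := c₀ ^ (1/p) + 1 with hc₁def
  have hc₁0 : 0 < c₁ := by positivity
  set κ : ℝ := 1 + 2 * c₁ * sG * V ^ (1/(n:ℝ)) with hκdef
  have hVr0 : 0 ≤ V ^ (1/(n:ℝ)) := Real.rpow_nonneg hV0 _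
  have h2c : 0 ≤ 2 * c₁ * sG * V ^ (1/(n:ℝ)) :=
    mul_nonneg (mul_nonneg (by linarith) hsG0.le) hVr0
  have hκ1 : 1 ≤ κ := le_add_of_nonneg_right h2c
  have hκ0 : 0 < κ := lt_of_lt_of_le one_pos hκ1
  have hfrac : sG / κ * (c₁ * V ^ (1/(n:ℝ))) ≤ 1/2 := by
    rw [div_mul_eq_mul_div, div_le_iff₀ hκ0, hκdef]
    nlinarith [mul_nonneg (mul_nonneg hc₁0.le hsG0.le) hVr0]
  have hκs : 0 < κ ^ (sG - 1) := Real.rpow_pos_of_pos hκ0 _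
  set β : ℝ := 2 * sG * κ ^ (sG - 1) with hβdef
  have hβ0 : 0 < β := by positivity
  set C : ℝ := 2 ^ (p - 1) * c₀ * β ^ p + 1 with hCdef
  have hCpos : 0 < C := by positivity
  refine ⟨C, hCpos, ?_⟩
  intro u hu h2u h3u
  set Y : ℝ := ∫ x in Ω, G ‖fderiv ℝ u x‖ with hYdef
  have hGmc : Continuous (fun t => G (max t 0)) := aux_Gmax_cont hconv hG0 hG' hGpos
  have hY0 : 0 ≤ Y :=
    setIntegral_nonneg hΩmeas (fun x _ => aux_nonneg hG0 hGpos (norm_nonneg _))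
  have hucont := hu.continuous
  have hDcont : Continuous (fun x => ‖fderiv ℝ u x‖) := (hu.continuous_fderiv one_ne_zero).norm
  -- integrability of G ∘ ‖fderiv u‖
  have hGDint : Integrable (fun x => G ‖fderiv ℝ u x‖) := by
    have hc : Continuous (fun x => G (max ‖fderiv ℝ u x‖ 0)) := hGmc.comp hDcont
    have hsupp : HasCompactSupport (fun x => G (max ‖fderiv ℝ u x‖ 0)) := by
      have h2 : HasCompactSupport (fun x => ‖fderiv ℝ u x‖) :=
        (h2u.fderiv (𝕜 := ℝ)).comp_left
          (g := fun w : EuclideanSpace ℝ (Fin n) →L[ℝ] EuclideanSpace ℝ (Fin m) => ‖w‖) norm_zero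
      exact h2.comp_left (g := fun t : ℝ => G (max t 0)) (by simp [hG0])
    exact (hc.integrable_of_hasCompactSupport hsupp).congr
      (Filter.Eventually.of_forall fun x => by
        show G (max ‖fderiv ℝ u x‖ 0) = G ‖fderiv ℝ u x‖
        rw [max_eq_left (norm_nonneg _)])
  -- integrability of (G ∘ ‖u‖)^p
  have hGuint : Integrable (fun x => G ‖u x‖ ^ p) := by
    have hc : Continuous (fun x => G (max ‖u x‖ 0) ^ p) :=
      (hGmc.comp hucont.norm).rpow_const (fun x => Or.inr hp0.le)
    have hsupp : HasCompactSupport (fun x => G (max ‖u x‖ 0) ^ p) := by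
      apply h2u.comp_left (g := fun w : EuclideanSpace ℝ (Fin m) => G (max ‖w‖ 0) ^ p)
      simp [hG0, Real.zero_rpow (ne_of_gt hp0)]
    exact (hc.integrable_of_hasCompactSupport hsupp).congr
      (Filter.Eventually.of_forall fun x => by
        show G (max ‖u x‖ 0) ^ p = G ‖u x‖ ^ p
        rw [max_eq_left (norm_nonneg _)])
  haveI : IsFiniteMeasure (volume.restrict Ω) :=
    ⟨by rwa [Measure.restrict_apply_univ]⟩
  have hpq : Real.HolderConjugate p (n:ℝ) := by
    refine Real.HolderConjugate.symm ((Real.holderConjugate_iff_eq_conjExponent hn1).2 ?_)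
    rw [hpdef]
  -- the ε-family bound
  have main : ∀ ε : ℝ, 0 < ε →
      ∫ x in Ω, G ‖u x‖ ^ p ≤
        2 ^ (p-1) * (c₀ * (2 * (sG/κ) * (G ε * V) + β * Y) ^ p + (G ε) ^ p * V) := by
    intro ε hε
    have hGε0 : 0 ≤ G ε := aux_nonneg hG0 hGpos hε.le
    set s : EuclideanSpace ℝ (Fin n) → ℝ := fun y => Real.sqrt (‖u y‖^2 + ε^2) with hsdef
    have hsp : ∀ y, 0 < s y := fun y => Real.sqrt_pos.2 (by positivity)
    have hεs : ∀ y, ε ≤ s y := fun y => by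
      have h := Real.sqrt_le_sqrt (show ε^2 ≤ ‖u y‖^2 + ε^2 by nlinarith [sq_nonneg ‖u y‖])
      rwa [Real.sqrt_sq hε.le] at h
    have hus : ∀ y, ‖u y‖ ≤ s y := fun y => by
      have h := Real.sqrt_le_sqrt (show ‖u y‖^2 ≤ ‖u y‖^2 + ε^2 by nlinarith [sq_nonneg ε])
      rwa [Real.sqrt_sq (norm_nonneg _)] at h
    set v : EuclideanSpace ℝ (Fin n) → ℝ := fun y => G (s y) - G ε with hvdef
    have hv0 : ∀ y, 0 ≤ v y := fun y =>
      sub_nonneg.2 (aux_mono hconv hG0 hGpos hε.le (hεs y))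
    have hvz : ∀ x, x ∉ tsupport u → v x = 0 := by
      intro x hx
      have hux : u x = 0 := image_eq_zero_of_notMem_tsupport hx
      show G (s x) - G ε = 0
      have hsx : s x = ε := by
        show Real.sqrt (‖u x‖^2 + ε^2) = ε
        rw [hux]
        simp [Real.sqrt_sq hε.le]
      rw [hsx]; ring
    have hvcd : ContDiff ℝ 1 v := by
      rw [contDiff_iff_contDiffAt]
      intro x
      have h1' : ContDiffAt ℝ 1 (fun y => ‖u y‖^2 + ε^2) x :=
        (hu.contDiffAt.norm_sq ℝ).add contDiffAt_const
      have h2' : ContDiffAt ℝ 1 s x := h1'.sqrt (by positivity)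
      exact ((aux_contDiffAt hconv hG' (hsp x)).comp x h2').sub contDiffAt_const
    have hvsupp : HasCompactSupport v := HasCompactSupport.intro h2u hvz
    have hfdb : ∀ x, ‖fderiv ℝ v x‖ ≤ g (s x) * ‖fderiv ℝ u x‖ := by
      intro x
      obtain ⟨D, hD, hDb⟩ := aux_deriv hG' u hu hε x
        (le_of_lt (aux_gpos hGpos h1 hbd (hsp x)))
      have hDv : HasFDerivAt v D x := hD.sub_const (G ε)
      rw [hDv.fderiv]
      exact hDb
    have hvcont := hvcd.continuous
    have hvint : Integrable v := hvcont.integrable_of_hasCompactSupport hvsupp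
    have hvpc : Continuous (fun x => v x ^ p) := hvcont.rpow_const (fun x => Or.inr hp0.le)
    have hvpsupp : HasCompactSupport (fun x => v x ^ p) :=
      hvsupp.comp_left (g := fun t : ℝ => t ^ p) (Real.zero_rpow (ne_of_gt hp0))
    have hvpint : Integrable (fun x => v x ^ p) := hvpc.integrable_of_hasCompactSupport hvpsupp
    have hfdc : Continuous (fun x => ‖fderiv ℝ v x‖) := (hvcd.continuous_fderiv one_ne_zero).norm
    have hfdsupp : HasCompactSupport (fun x => ‖fderiv ℝ v x‖) :=
      (hvsupp.fderiv (𝕜 := ℝ)).comp_left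
        (g := fun w : EuclideanSpace ℝ (Fin n) →L[ℝ] ℝ => ‖w‖) norm_zero
    have hfdint : Integrable (fun x => ‖fderiv ℝ v x‖) :=
      hfdc.integrable_of_hasCompactSupport hfdsupp
    set Z : ℝ := ∫ x, ‖fderiv ℝ v x‖ with hZdef
    have hZ0 : 0 ≤ Z := integral_nonneg fun x => norm_nonneg _
    set X : ℝ := ∫ x, v x ^ p with hXdef
    have hX0 : 0 ≤ X := integral_nonneg fun x => Real.rpow_nonneg (hv0 x) p
    have hXc : X ≤ c₀ * Z ^ p := aux_gns hn v hvcd hvsupp hv0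
    have hW : X ^ (1/p) ≤ c₁ * Z := by
      have ha' : X ^ (1/p) ≤ (c₀ * Z ^ p) ^ (1/p) :=
        Real.rpow_le_rpow hX0 hXc (by positivity)
      have hb' : (c₀ * Z ^ p) ^ (1/p) = c₀ ^ (1/p) * Z := by
        rw [Real.mul_rpow hc₀0 (Real.rpow_nonneg hZ0 p), ← Real.rpow_mul hZ0,
          mul_one_div_cancel (ne_of_gt hp0), Real.rpow_one]
      have hc' : c₀ ^ (1/p) * Z ≤ c₁ * Z :=
        mul_le_mul_of_nonneg_right (by rw [hc₁def]; linarith) hZ0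
      linarith
    have hholder : ∫ x in Ω, v x ≤ X ^ (1/p) * V ^ (1/(n:ℝ)) := by
      have hmem1 : MemLp v (ENNReal.ofReal p) (volume.restrict Ω) :=
        (hvcont.memLp_of_hasCompactSupport hvsupp).restrict Ω
      have hmem2 : MemLp (fun _ : EuclideanSpace ℝ (Fin n) => (1:ℝ))
          (ENNReal.ofReal (n:ℝ)) (volume.restrict Ω) := memLp_const 1
      have h := integral_mul_le_Lp_mul_Lq_of_nonneg hpq
        (Filter.Eventually.of_forall fun x => hv0 x)
        (Filter.Eventually.of_forall fun _ => zero_le_one) hmem1 hmem2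
      simp only [mul_one, Real.one_rpow] at h
      have hconst : (∫ _ in Ω, (1:ℝ)) = V := by
        rw [setIntegral_const, smul_eq_mul, mul_one, measureReal_def, ← hVdef]
      rw [hconst] at h
      calc ∫ x in Ω, v x ≤ (∫ x in Ω, v x ^ p) ^ (1/p) * V ^ (1/(n:ℝ)) := h
        _ ≤ X ^ (1/p) * V ^ (1/(n:ℝ)) := by
            apply mul_le_mul_of_nonneg_right _ hVr0
            exact Real.rpow_le_rpow
              (setIntegral_nonneg hΩmeas fun x _ => Real.rpow_nonneg (hv0 x) p)
              (setIntegral_le_integral hvpint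
                (Filter.Eventually.of_forall fun x => Real.rpow_nonneg (hv0 x) p))
              (by positivity)
    have htsv : tsupport v ⊆ Ω := by
      apply subset_trans _ h3u
      apply closure_minimal _ (isClosed_closure)
      intro x hx
      by_contra hxx
      exact hx (hvz x hxx)
    have hZΩ : Z = ∫ x in Ω, ‖fderiv ℝ v x‖ := by
      rw [hZdef]
      symm
      apply setIntegral_eq_integral_of_forall_compl_eq_zero
      intro x hx
      have hxn : x ∉ tsupport v := fun hmem => hx (htsv hmem)
      have hz : fderiv ℝ v x = 0 := by
        by_contra hne
        exact hxn (support_fderiv_subset ℝ (Function.mem_support.2 hne))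
      simp [hz]
    have hzb : Z ≤ sG/κ * (∫ x in Ω, v x) + sG/κ * (G ε * V) + sG * κ^(sG-1) * Y := by
      rw [hZΩ]
      have hpt : ∀ x ∈ Ω, ‖fderiv ℝ v x‖ ≤
          sG/κ * (v x + G ε) + sG * κ^(sG-1) * G ‖fderiv ℝ u x‖ := by
        intro x _
        have hy := aux_young hconv hG0 hGpos hG' h1 hle hbd (hsp x)
          (norm_nonneg (fderiv ℝ u x)) hκ1
        have hGsx : G (s x) = v x + G ε := by show G (s x) = G (s x) - G ε + G ε; ring
        calc ‖fderiv ℝ v x‖ ≤ g (s x) * ‖fderiv ℝ u x‖ := hfdb x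
          _ = ‖fderiv ℝ u x‖ * g (s x) := mul_comm _ _
          _ ≤ sG/κ * G (s x) + sG * κ^(sG-1) * G ‖fderiv ℝ u x‖ := hy
          _ = sG/κ * (v x + G ε) + sG * κ^(sG-1) * G ‖fderiv ℝ u x‖ := by rw [hGsx]
      have hint2 : IntegrableOn
          (fun x => sG/κ * (v x + G ε) + sG * κ^(sG-1) * G ‖fderiv ℝ u x‖) Ω := by
        apply Integrable.add
        · exact (hvint.integrableOn.add (integrableOn_const hVfin.ne)).const_mul _
        · exact hGDint.integrableOn.const_mul _
      have hmono := setIntegral_mono_on hfdint.integrableOn hint2 hΩmeas hpt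
      have hval : ∫ x in Ω, (sG/κ * (v x + G ε) + sG * κ^(sG-1) * G ‖fderiv ℝ u x‖) =
          sG/κ * ((∫ x in Ω, v x) + G ε * V) + sG * κ^(sG-1) * Y := by
        have I0 : IntegrableOn (fun x => v x + G ε) Ω :=
          hvint.integrableOn.add (integrableOn_const hVfin.ne)
        have I1 : IntegrableOn (fun x => sG/κ * (v x + G ε)) Ω := I0.const_mul _
        have I2 : IntegrableOn (fun x => sG * κ^(sG-1) * G ‖fderiv ℝ u x‖) Ω :=
          hGDint.integrableOn.const_mul _
        rw [integral_add I1 I2, integral_const_mul, integral_const_mul,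
          integral_add hvint.integrableOn (integrableOn_const hVfin.ne),
          setIntegral_const, smul_eq_mul, measureReal_def, ← hVdef, ← hYdef]
        ring
      rw [hval] at hmono
      linarith [hmono]
    have habs : Z ≤ 2 * (sG/κ) * (G ε * V) + β * Y := by
      have hsκ0 : (0:ℝ) ≤ sG/κ := by positivity
      have t1 : sG/κ * (∫ x in Ω, v x) ≤ sG/κ * (X^(1/p) * V^(1/(n:ℝ))) :=
        mul_le_mul_of_nonneg_left hholder hsκ0
      have t2 : sG/κ * (X^(1/p) * V^(1/(n:ℝ))) ≤ sG/κ * ((c₁ * Z) * V^(1/(n:ℝ))) :=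
        mul_le_mul_of_nonneg_left (mul_le_mul_of_nonneg_right hW hVr0) hsκ0
      have t3 : sG/κ * ((c₁ * Z) * V^(1/(n:ℝ))) = (sG/κ * (c₁ * V^(1/(n:ℝ)))) * Z := by ring
      have t4 : (sG/κ * (c₁ * V^(1/(n:ℝ)))) * Z ≤ 1/2 * Z :=
        mul_le_mul_of_nonneg_right hfrac hZ0
      have hβY : β * Y = 2 * (sG * κ^(sG-1) * Y) := by rw [hβdef]; ring
      linarith [t1, t2, t3, t4, hzb, hβY]
    have hLpt : ∀ x ∈ Ω, G ‖u x‖ ^ p ≤ 2^(p-1) * (v x ^ p + (G ε)^p) := by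
      intro x _
      have hub : G ‖u x‖ ≤ v x + G ε := by
        have hm := aux_mono hconv hG0 hGpos (norm_nonneg (u x)) (hus x)
        have hGsx : G (s x) = v x + G ε := by show G (s x) = G (s x) - G ε + G ε; ring
        linarith
      have h0' : 0 ≤ G ‖u x‖ := aux_nonneg hG0 hGpos (norm_nonneg _)
      calc G ‖u x‖ ^ p ≤ (v x + G ε) ^ p := Real.rpow_le_rpow h0' hub hp0.le
        _ ≤ 2^(p-1) * (v x ^ p + (G ε)^p) := aux_addpow (hv0 x) hGε0 hp1.le
    have hRint : IntegrableOn (fun x => 2^(p-1) * (v x ^ p + (G ε)^p)) Ω :=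
      (hvpint.integrableOn.add (integrableOn_const hVfin.ne)).const_mul _
    have hLHS := setIntegral_mono_on hGuint.integrableOn hRint hΩmeas hLpt
    have hRval : ∫ x in Ω, 2^(p-1) * (v x ^ p + (G ε)^p) =
        2^(p-1) * ((∫ x in Ω, v x ^ p) + (G ε)^p * V) := by
      rw [integral_const_mul,
        integral_add hvpint.integrableOn (integrableOn_const hVfin.ne),
        setIntegral_const, smul_eq_mul, measureReal_def, ← hVdef]
      ring
    have hXΩ : ∫ x in Ω, v x ^ p ≤ X := setIntegral_le_integral hvpint
      (Filter.Eventually.of_forall fun x => Real.rpow_nonneg (hv0 x) p)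
    have hZp : Z ^ p ≤ (2 * (sG/κ) * (G ε * V) + β * Y) ^ p :=
      Real.rpow_le_rpow hZ0 habs hp0.le
    have h2p0 : (0:ℝ) ≤ 2^(p-1) := by positivity
    calc ∫ x in Ω, G ‖u x‖ ^ p
        ≤ 2^(p-1) * ((∫ x in Ω, v x ^ p) + (G ε)^p * V) := by rw [← hRval]; exact hLHS
      _ ≤ 2^(p-1) * (c₀ * (2 * (sG/κ) * (G ε * V) + β * Y) ^ p + (G ε)^p * V) := by
          apply mul_le_mul_of_nonneg_left _ h2p0
          have hc1 : X ≤ c₀ * (2 * (sG/κ) * (G ε * V) + β * Y) ^ p :=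
            hXc.trans (mul_le_mul_of_nonneg_left hZp hc₀0)
          linarith
  -- limit ε → 0
  have hGtend : Filter.Tendsto (fun ε => G ε) (nhdsWithin 0 (Set.Ioi 0)) (nhds 0) := by
    have h0 : Filter.Tendsto (fun t => G (max t 0)) (nhds 0) (nhds 0) := by
      have := hGmc.tendsto 0
      simpa [hG0] using this
    apply Filter.Tendsto.congr' _ (h0.mono_left nhdsWithin_le_nhds)
    filter_upwards [self_mem_nhdsWithin] with t ht
    rw [max_eq_left (le_of_lt ht)]
  have hFcont : ContinuousAt
      (fun e : ℝ => 2 ^ (p-1) * (c₀ * (2 * (sG/κ) * (e * V) + β * Y) ^ p + e ^ p * V)) 0 := by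
    apply ContinuousAt.mul continuousAt_const
    apply ContinuousAt.add
    · apply ContinuousAt.mul continuousAt_const
      have hbase : ContinuousAt (fun e : ℝ => 2 * (sG/κ) * (e * V) + β * Y) 0 := by fun_prop
      exact hbase.rpow_const (Or.inr hp0.le)
    · apply ContinuousAt.mul _ continuousAt_const
      exact continuousAt_id.rpow_const (Or.inr hp0.le)
  have hlim : Filter.Tendsto
      (fun ε => 2 ^ (p-1) * (c₀ * (2 * (sG/κ) * (G ε * V) + β * Y) ^ p + (G ε) ^ p * V))
      (nhdsWithin 0 (Set.Ioi 0))
      (nhds (2 ^ (p-1) * (c₀ * (2 * (sG/κ) * ((0:ℝ) * V) + β * Y) ^ p + (0:ℝ) ^ p * V))) :=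
    hFcont.tendsto.comp hGtend
  have hfinal : ∫ x in Ω, G ‖u x‖ ^ p ≤
      2 ^ (p-1) * (c₀ * (2 * (sG/κ) * ((0:ℝ) * V) + β * Y) ^ p + (0:ℝ) ^ p * V) := by
    apply ge_of_tendsto hlim
    filter_upwards [self_mem_nhdsWithin] with ε hε
    exact main ε hε
  have hzero : (2:ℝ) ^ (p-1) * (c₀ * (2 * (sG/κ) * ((0:ℝ) * V) + β * Y) ^ p + (0:ℝ) ^ p * V)
      = 2 ^ (p-1) * c₀ * (β ^ p * Y ^ p) := by
    rw [Real.zero_rpow (ne_of_gt hp0)]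
    rw [show 2 * (sG/κ) * ((0:ℝ) * V) + β * Y = β * Y by ring]
    rw [Real.mul_rpow hβ0.le hY0]
    ring
  rw [hzero] at hfinal
  calc ∫ x in Ω, G ‖u x‖ ^ p ≤ 2 ^ (p-1) * c₀ * (β ^ p * Y ^ p) := hfinal
    _ ≤ C * Y ^ p := by
        rw [hCdef]
        have hYp : 0 ≤ Y ^ p := Real.rpow_nonneg hY0 _
        nlinarith [hYp]
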